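/- On ℝ³, define the 1-form α by α_p(v) = v₃ − p₁·v₂ for p = (p₁,p₂,p₃) and v = (v₁,v₂,v₃) (i.e. α = dz − x dy). Define L : ℝ³ → ℝ³ by L(x,y,z) = (2x+y, x+y, z + x² + xy + y²/2). For ε ∈ ℝ, define u_ε(x) = ε·sin(2πx), U_ε(x) = ε·x·sin(2πx) + (ε/(2π))·(cos(2πx) − 1), H_ε(x,y,z) = (x, y + u_ε(x), z + U_ε(x)), and F_ε := L ∘ H_ε. Then for every ε ∈ ℝ, F_ε preserves α: for every p ∈ ℝ³ and every v ∈ ℝ³, α_{F_ε(p)}(D(F_ε)_p(v)) = α_p(v), where D(F_ε)_p denotes the Fréchet derivative of F_ε at p. -/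

import Mathlib

/-- The standard contact form `α = dz - x dy` of the Heisenberg manifold, at the point `p`
evaluated on the tangent vector `v`. -/
noncomputable def heisAlpha (p v : ℝ × ℝ × ℝ) : ℝ := v.2.2 - p.1 * v.2.1

/-- The lift `L(x,y,z) = (2x+y, x+y, z + x² + xy + y²/2)`. -/
noncomputable def Lmap (p : ℝ × ℝ × ℝ) : ℝ × ℝ × ℝ :=
  (2 * p.1 + p.2.1, p.1 + p.2.1, p.2.2 + p.1 ^ 2 + p.1 * p.2.1 + p.2.1 ^ 2 / 2)

/-- `u_ε(x) = ε sin(2πx)`. -/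
noncomputable def uEps (ε x : ℝ) : ℝ := ε * Real.sin (2 * Real.pi * x)

/-- `U_ε(x) = ε x sin(2πx) + (ε/(2π))(cos(2πx) - 1)`. -/
noncomputable def UEps (ε x : ℝ) : ℝ :=
  ε * x * Real.sin (2 * Real.pi * x) + (ε / (2 * Real.pi)) * (Real.cos (2 * Real.pi * x) - 1)

/-- The shear map `H_ε(x,y,z) = (x, y + u_ε(x), z + U_ε(x))`. -/
noncomputable def Hmap (ε : ℝ) (p : ℝ × ℝ × ℝ) : ℝ × ℝ × ℝ :=
  (p.1, p.2.1 + uEps ε p.1, p.2.2 + UEps ε p.1)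

/-- The perturbed automorphism `F_ε = L ∘ H_ε`. -/
noncomputable def Fmap (ε : ℝ) : ℝ × ℝ × ℝ → ℝ × ℝ × ℝ := Lmap ∘ Hmap ε

lemma hasDerivAt_sin2pi (x : ℝ) :
    HasDerivAt (fun t : ℝ => Real.sin (2 * Real.pi * t))
      (Real.cos (2 * Real.pi * x) * (2 * Real.pi)) x := by
  have h : HasDerivAt (fun t : ℝ => 2 * Real.pi * t) (2 * Real.pi * 1) x :=
    (hasDerivAt_id x).const_mul (2 * Real.pi)
  exact ((Real.hasDerivAt_sin (2 * Real.pi * x)).comp x h).congr_deriv (by ring)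

lemma hasDerivAt_cos2pi (x : ℝ) :
    HasDerivAt (fun t : ℝ => Real.cos (2 * Real.pi * t))
      (-Real.sin (2 * Real.pi * x) * (2 * Real.pi)) x := by
  have h : HasDerivAt (fun t : ℝ => 2 * Real.pi * t) (2 * Real.pi * 1) x :=
    (hasDerivAt_id x).const_mul (2 * Real.pi)
  exact ((Real.hasDerivAt_cos (2 * Real.pi * x)).comp x h).congr_deriv (by ring)

lemma hasDerivAt_uEps (ε x : ℝ) :
    HasDerivAt (uEps ε) (ε * (2 * Real.pi * Real.cos (2 * Real.pi * x))) x := by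
  have := (hasDerivAt_sin2pi x).const_mul ε
  unfold uEps
  exact this.congr_deriv (by ring)

lemma hasDerivAt_UEps (ε x : ℝ) :
    HasDerivAt (UEps ε) (x * (ε * (2 * Real.pi * Real.cos (2 * Real.pi * x)))) x := by
  have h1 : HasDerivAt (fun t : ℝ => ε * t * Real.sin (2 * Real.pi * t))
      (ε * 1 * Real.sin (2 * Real.pi * x)
        + ε * x * (Real.cos (2 * Real.pi * x) * (2 * Real.pi))) x :=
    (((hasDerivAt_id x).const_mul ε).mul (hasDerivAt_sin2pi x))
  have h2 : HasDerivAt (fun t : ℝ => (ε / (2 * Real.pi)) * (Real.cos (2 * Real.pi * t) - 1))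
      ((ε / (2 * Real.pi)) * (-Real.sin (2 * Real.pi * x) * (2 * Real.pi))) x :=
    ((hasDerivAt_cos2pi x).sub_const 1).const_mul (ε / (2 * Real.pi))
  have h := h1.add h2
  unfold UEps
  refine h.congr_deriv ?_
  have hπ : (2 * Real.pi) ≠ 0 := by positivity
  field_simp
  ring

/-- `F_ε = L ∘ H_ε` preserves the contact form `α = dz - x dy`. -/
theorem stmt_12 (ε : ℝ) (p v : ℝ × ℝ × ℝ) :
    heisAlpha (Fmap ε p) (fderiv ℝ (Fmap ε) p v) = heisAlpha p v := by
  set π1 : (ℝ × ℝ × ℝ) →L[ℝ] ℝ := ContinuousLinearMap.fst ℝ ℝ (ℝ × ℝ) with hπ1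
  set π2 : (ℝ × ℝ × ℝ) →L[ℝ] ℝ :=
    (ContinuousLinearMap.fst ℝ ℝ ℝ).comp (ContinuousLinearMap.snd ℝ ℝ (ℝ × ℝ)) with hπ2
  set π3 : (ℝ × ℝ × ℝ) →L[ℝ] ℝ :=
    (ContinuousLinearMap.snd ℝ ℝ ℝ).comp (ContinuousLinearMap.snd ℝ ℝ (ℝ × ℝ)) with hπ3
  have hx : HasFDerivAt (fun q : ℝ × ℝ × ℝ => q.1) π1 p := hasFDerivAt_fst
  have hy : HasFDerivAt (fun q : ℝ × ℝ × ℝ => q.2.1) π2 p :=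
    hasFDerivAt_fst.comp p hasFDerivAt_snd
  have hz : HasFDerivAt (fun q : ℝ × ℝ × ℝ => q.2.2) π3 p :=
    hasFDerivAt_snd.comp p hasFDerivAt_snd
  set u' : ℝ := ε * (2 * Real.pi * Real.cos (2 * Real.pi * p.1)) with hu'
  have hu : HasFDerivAt (fun q : ℝ × ℝ × ℝ => uEps ε q.1) (u' • π1) p :=
    (hasDerivAt_uEps ε p.1).comp_hasFDerivAt p hx
  have hU : HasFDerivAt (fun q : ℝ × ℝ × ℝ => UEps ε q.1) ((p.1 * u') • π1) p :=
    (hasDerivAt_UEps ε p.1).comp_hasFDerivAt p hx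
  have h1 := (hx.const_mul 2).add (hy.add hu)
  have h2 := hx.add (hy.add hu)
  have h3 := (((hz.add hU).add ((hx.mul hx))).add (hx.mul (hy.add hu))).add
      ((((hy.add hu).mul (hy.add hu))).const_mul (1/2 : ℝ))
  have hF := HasFDerivAt.prodMk h1 (HasFDerivAt.prodMk h2 h3)
  have hFeq : Fmap ε = fun q : ℝ × ℝ × ℝ =>
      (2 * q.1 + (q.2.1 + uEps ε q.1), q.1 + (q.2.1 + uEps ε q.1),
        q.2.2 + UEps ε q.1 + q.1 * q.1 + q.1 * (q.2.1 + uEps ε q.1)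
          + 1/2 * ((q.2.1 + uEps ε q.1) * (q.2.1 + uEps ε q.1))) := by
    funext q
    refine Prod.ext ?_ (Prod.ext ?_ ?_) <;>
      simp [Fmap, Lmap, Hmap, Function.comp] <;> ring
  rw [hFeq]
  erw [hF.fderiv]
  simp only [heisAlpha, hπ1, hπ2, hπ3, ContinuousLinearMap.prod_apply,
    ContinuousLinearMap.add_apply, ContinuousLinearMap.smul_apply,
    ContinuousLinearMap.coe_comp', Function.comp_apply,
    ContinuousLinearMap.coe_fst', ContinuousLinearMap.coe_snd',
    smul_eq_mul, Pi.add_apply]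
  ring
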